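/- Tensoriality of even-order antisymmetrized higher covariant derivatives: if the connection ∇̂ on TM is torsion-free, then for every j ≥ 1 and all smooth vector fields v_1, w_1, …, v_j, w_j on M, the operator ∇^{2j}_{(v_1⊗w_1 − w_1⊗v_1)⊗⋯⊗(v_j⊗w_j − w_j⊗v_j)} on C∞(E) is C∞(M)-linear, i.e. for every f ∈ C∞(M) and α ∈ C∞(E), ∇^{2j}_{(v_1⊗w_1 − w_1⊗v_1)⊗⋯⊗(v_j⊗w_j − w_j⊗v_j)}(f·α) = f·∇^{2j}_{(v_1⊗w_1 − w_1⊗v_1)⊗⋯⊗(v_j⊗w_j − w_j⊗v_j)}α. -/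
import Mathlib


/-!
Algebraic framework for manifolds with connection:
`R` plays the role of the ring of smooth functions `C^∞(M)`,
`V` the `C^∞(M)`-module of smooth vector fields `C^∞(TM)`,
`VFAct` the action of vector fields on functions as derivations,
`Conn` a connection (covariant derivative) on the module of sections `E`
of a vector bundle, and `hcd` the higher covariant derivative defined
inductively by
`∇^{j+1}_{X₀,…,X_j} α = ∇_{X₀}(∇^j_{X₁,…,X_j} α) − Σ_k ∇^j_{X₁,…,∇̂_{X₀}X_k,…,X_j} α`.
-/

open TensorProduct

/-- The action of vector fields on smooth functions as (ℝ-linear) derivations. -/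
structure VFAct (R : Type*) [CommRing R] [Algebra ℝ R]
    (V : Type*) [AddCommGroup V] [Module R V] where
  act : V → R → R
  act_add_right : ∀ X f g, act X (f + g) = act X f + act X g
  act_mul_right : ∀ X f g, act X (f * g) = act X f * g + f * act X g
  act_add_left : ∀ X Y f, act (X + Y) f = act X f + act Y f
  act_smul_left : ∀ (f : R) X g, act (f • X) g = f * act X g
  act_algebraMap : ∀ X (r : ℝ), act X (algebraMap ℝ R r) = 0

/-- A connection (covariant derivative) on the `R = C^∞(M)`-module `E` of sections of a
smooth vector bundle, relative to the action `D` of vector fields on functions. -/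
structure Conn (R : Type*) [CommRing R] [Algebra ℝ R]
    (V : Type*) [AddCommGroup V] [Module R V]
    (E : Type*) [AddCommGroup E] [Module R E]
    (D : VFAct R V) where
  d : V → E → E
  d_add_right : ∀ X α β, d X (α + β) = d X α + d X β
  d_smul_right : ∀ X (f : R) α, d X (f • α) = D.act X f • α + f • d X α
  d_add_left : ∀ X Y α, d (X + Y) α = d X α + d Y α
  d_smul_left : ∀ (f : R) X α, d (f • X) α = f • d X α

variable {R : Type*} [CommRing R] [Algebra ℝ R]
variable {V : Type*} [AddCommGroup V] [Module R V]

/-- The higher covariant derivative `∇^j_{X₁,…,X_j}` along a tuple of vector fields,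
defined inductively by
`∇^{j+1}_{X₀,…,X_j} α = ∇_{X₀}(∇^j_{X₁,…,X_j} α) − Σ_k ∇^j_{X₁,…,∇̂_{X₀}X_k,…,X_j} α`. -/
def hcd {E : Type*} [AddCommGroup E] [Module R E] {D : VFAct R V}
    (cT : Conn R V V D) (cE : Conn R V E D) : (j : ℕ) → (Fin j → V) → E → E
  | 0, _, α => α
  | j + 1, X, α =>
      cE.d (X 0) (hcd cT cE j (fun k => X k.succ) α)
        - ∑ k : Fin j,
            hcd cT cE j (Function.update (fun m => X m.succ) k (cT.d (X 0) (X k.succ))) α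

/-- The connection `∇̂` is torsion-free: `∇̂_X Y − ∇̂_Y X = [X,Y]`, where the Lie bracket
is characterized by its action on functions. -/
def TorsionFree {D : VFAct R V} (cT : Conn R V V D) : Prop :=
  ∀ X Y f, D.act (cT.d X Y - cT.d Y X) f = D.act X (D.act Y f) - D.act Y (D.act X f)

/-- The `2j`-tuple of vector fields obtained from
`(v₁ ⊗ w₁ − w₁ ⊗ v₁) ⊗ ⋯ ⊗ (v_j ⊗ w_j − w_j ⊗ v_j)` by choosing, for each `k`, the
order `v_k ⊗ w_k` if `ε k = true` and `w_k ⊗ v_k` if `ε k = false`. -/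
def altTuple {V : Type*} {j : ℕ} (v w : Fin j → V) (ε : Fin j → Bool) :
    Fin (2 * j) → V := fun m =>
  let k : Fin j := ⟨m.val / 2, by have := m.isLt; omega⟩
  if m.val % 2 = 0 then (if ε k then v k else w k) else (if ε k then w k else v k)


/-! ### Auxiliary development -/

section Aux

variable {E : Type*} [AddCommGroup E] [Module R E] {D : VFAct R V}

/-- A connection sends `0` to `0` (in the section argument). -/
theorem Conn.d_zero_right (c : Conn R V E D) (X : V) : c.d X 0 = 0 := by
  have h := c.d_add_right X 0 0
  rw [add_zero] at h
  exact left_eq_add.mp h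

/-- The covariant derivative along a fixed vector field, as an additive monoid hom. -/
def Conn.dHom (c : Conn R V E D) (X : V) : E →+ E :=
  AddMonoidHom.mk' (c.d X) (c.d_add_right X)

@[simp] theorem Conn.dHom_apply (c : Conn R V E D) (X : V) (α : E) :
    c.dHom X α = c.d X α := rfl

theorem Conn.d_sub_right (c : Conn R V E D) (X : V) (α β : E) :
    c.d X (α - β) = c.d X α - c.d X β :=
  (c.dHom X).map_sub α β

theorem Conn.d_zero_left (c : Conn R V E D) (α : E) : c.d 0 α = 0 := by
  have h := c.d_add_left 0 0 α
  rw [add_zero] at h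
  exact left_eq_add.mp h

theorem Conn.d_neg_left (c : Conn R V E D) (X : V) (α : E) : c.d (-X) α = - c.d X α := by
  rw [← neg_one_smul R X, c.d_smul_left, neg_one_smul]

theorem Conn.d_sub_left (c : Conn R V E D) (X Y : V) (α : E) :
    c.d (X - Y) α = c.d X α - c.d Y α := by
  rw [sub_eq_add_neg, c.d_add_left, c.d_neg_left, sub_eq_add_neg]

/-- The curvature operator `K(X,Y) = ∇_X ∇_Y − ∇_Y ∇_X − ∇_{∇̂_X Y − ∇̂_Y X}`,
as an additive monoid hom. -/
def curvHom (cT : Conn R V V D) (c : Conn R V E D) (X Y : V) : E →+ E :=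
  (c.dHom X).comp (c.dHom Y) - (c.dHom Y).comp (c.dHom X) - c.dHom (cT.d X Y - cT.d Y X)

theorem curvHom_apply (cT : Conn R V V D) (c : Conn R V E D) (X Y : V) (β : E) :
    curvHom cT c X Y β
      = c.d X (c.d Y β) - c.d Y (c.d X β) - c.d (cT.d X Y - cT.d Y X) β := rfl

/-- Tensoriality of the curvature operator, given torsion-freeness. -/
theorem curvHom_smul (cT : Conn R V V D) (c : Conn R V E D) (htf : TorsionFree cT)
    (X Y : V) (f : R) (β : E) :
    curvHom cT c X Y (f • β) = f • curvHom cT c X Y β := by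
  rw [curvHom_apply, curvHom_apply]
  rw [c.d_smul_right, c.d_add_right, c.d_smul_right, c.d_smul_right,
      c.d_smul_right, c.d_add_right, c.d_smul_right, c.d_smul_right,
      c.d_smul_right, htf X Y f]
  rw [sub_smul, smul_sub, smul_sub]
  abel

end Aux

section Hcd

variable {E : Type*} [AddCommGroup E] [Module R E] {D : VFAct R V}
variable (cT : Conn R V V D) (cE : Conn R V E D)

theorem hcd_cons (N : ℕ) (X₀ : V) (Y : Fin N → V) (α : E) :
    hcd cT cE (N + 1) (Fin.cons X₀ Y) α
      = cE.d X₀ (hcd cT cE N Y α)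
        - ∑ k : Fin N, hcd cT cE N (Function.update Y k (cT.d X₀ (Y k))) α := by
  have h : (fun k : Fin N => (Fin.cons X₀ Y : Fin (N+1) → V) k.succ) = Y := by
    funext k; simp
  rw [hcd]
  simp only [Fin.cons_zero, Fin.cons_succ, h]

theorem hcd_update_add (N : ℕ) :
    ∀ (Y : Fin N → V) (k : Fin N) (a b : V) (α : E),
    hcd cT cE N (Function.update Y k (a + b)) α
      = hcd cT cE N (Function.update Y k a) α + hcd cT cE N (Function.update Y k b) α := by
  induction N with
  | zero => exact fun _ k => k.elim0
  | succ N ih =>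
    intro Y k a b α
    induction k using Fin.cases with
    | zero =>
      have hY : ∀ c : V, Function.update Y 0 c = Fin.cons c (Fin.tail Y) := by
        intro c; funext m
        induction m using Fin.cases with
        | zero => simp
        | succ i => simp [Fin.tail, Function.update_of_ne (Fin.succ_ne_zero i)]
      rw [hY, hY, hY, hcd_cons, hcd_cons, hcd_cons, cE.d_add_left]
      have hs : ∀ k : Fin N,
          hcd cT cE N (Function.update (Fin.tail Y) k (cT.d (a + b) (Fin.tail Y k))) α
            = hcd cT cE N (Function.update (Fin.tail Y) k (cT.d a (Fin.tail Y k))) α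
              + hcd cT cE N (Function.update (Fin.tail Y) k (cT.d b (Fin.tail Y k))) α := by
        intro k
        rw [cT.d_add_left]
        exact ih _ k _ _ α
      rw [Finset.sum_congr rfl (fun k _ => hs k), Finset.sum_add_distrib]
      abel
    | succ i =>
      have hY : ∀ c : V, Function.update Y i.succ c
          = Fin.cons (Y 0) (Function.update (Fin.tail Y) i c) := by
        intro c; funext m
        induction m using Fin.cases with
        | zero => simp [Function.update_of_ne (Fin.succ_ne_zero i).symm]
        | succ p => simp [Function.update_apply, Fin.tail, Fin.succ_inj]
      rw [hY, hY, hY, hcd_cons, hcd_cons, hcd_cons, ih _ i a b α, cE.d_add_right]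
      have hs : ∀ k : Fin N,
          hcd cT cE N (Function.update (Function.update (Fin.tail Y) i (a + b)) k
              (cT.d (Y 0) (Function.update (Fin.tail Y) i (a + b) k))) α
            = hcd cT cE N (Function.update (Function.update (Fin.tail Y) i a) k
                (cT.d (Y 0) (Function.update (Fin.tail Y) i a k))) α
              + hcd cT cE N (Function.update (Function.update (Fin.tail Y) i b) k
                (cT.d (Y 0) (Function.update (Fin.tail Y) i b k))) α := by
        intro k
        by_cases hk : k = i
        · subst hk
          simp only [Function.update_self, Function.update_idem]
          rw [cT.d_add_right]
          exact ih _ k _ _ α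
        · rw [Function.update_of_ne hk, Function.update_of_ne hk, Function.update_of_ne hk,
              Function.update_comm (Ne.symm hk), Function.update_comm (Ne.symm hk),
              Function.update_comm (Ne.symm hk)]
          exact ih _ i a b α
      rw [Finset.sum_congr rfl (fun k _ => hs k), Finset.sum_add_distrib]
      abel

theorem hcd_update_zero (N : ℕ) (Y : Fin N → V) (k : Fin N) (α : E) :
    hcd cT cE N (Function.update Y k 0) α = 0 := by
  have h := hcd_update_add cT cE N Y k 0 0 α
  rw [add_zero] at h
  exact left_eq_add.mp h

theorem hcd_update_neg (N : ℕ) (Y : Fin N → V) (k : Fin N) (a : V) (α : E) :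
    hcd cT cE N (Function.update Y k (-a)) α = - hcd cT cE N (Function.update Y k a) α := by
  have h := hcd_update_add cT cE N Y k a (-a) α
  rw [add_neg_cancel, hcd_update_zero] at h
  exact eq_neg_of_add_eq_zero_right h.symm

theorem hcd_update_sub (N : ℕ) (Y : Fin N → V) (k : Fin N) (a b : V) (α : E) :
    hcd cT cE N (Function.update Y k (a - b)) α
      = hcd cT cE N (Function.update Y k a) α - hcd cT cE N (Function.update Y k b) α := by
  rw [sub_eq_add_neg, hcd_update_add, hcd_update_neg, sub_eq_add_neg]

end Hcd

section Key

theorem Conn.d_sum_right {E : Type*} [AddCommGroup E] [Module R E] {D : VFAct R V}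
    (c : Conn R V E D) (X : V) {ι : Type*} (s : Finset ι) (g : ι → E) :
    c.d X (∑ i ∈ s, g i) = ∑ i ∈ s, c.d X (g i) :=
  map_sum (c.dHom X) g s

theorem sum_sum_eq_diag_add_off {M : Type*} [AddCommMonoid M] {n : ℕ} (F : Fin n → Fin n → M) :
    ∑ m : Fin n, ∑ p : Fin n, F m p
      = (∑ m : Fin n, F m m) + ∑ m : Fin n, ∑ p : Fin n, (if p = m then 0 else F m p) := by
  rw [← Finset.sum_add_distrib]
  refine Finset.sum_congr rfl fun m _ => ?_
  have h : ∀ p : Fin n, F m p = (if p = m then F m m else 0) + (if p = m then 0 else F m p) := by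
    intro p; by_cases h : p = m <;> simp [h]
  rw [Finset.sum_congr rfl fun p _ => h p, Finset.sum_add_distrib,
      Finset.sum_ite_eq' Finset.univ m fun _ => F m m]
  simp

theorem sum_sum_off_symm {M : Type*} [AddCommMonoid M] {n : ℕ} (F G : Fin n → Fin n → M)
    (h : ∀ m p, p ≠ m → F m p = G p m) :
    (∑ m : Fin n, ∑ p : Fin n, if p = m then 0 else F m p)
      = ∑ m : Fin n, ∑ p : Fin n, if p = m then 0 else G m p := by
  rw [Finset.sum_comm]
  refine Finset.sum_congr rfl fun p _ => Finset.sum_congr rfl fun m _ => ?_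
  by_cases h1 : p = m
  · simp [h1]
  · rw [if_neg h1, if_neg (fun hh => h1 hh.symm), h m p h1]

variable {E : Type*} [AddCommGroup E] [Module R E] {D : VFAct R V}
variable (cT : Conn R V V D) (cE : Conn R V E D)

theorem hcd_expand2 (N : ℕ) (A B : V) (Y : Fin N → V) (α : E) :
    hcd cT cE (N + 1 + 1) (Fin.cons A (Fin.cons B Y)) α =
      cE.d A (cE.d B (hcd cT cE N Y α))
      - (∑ m : Fin N, cE.d A (hcd cT cE N (Function.update Y m (cT.d B (Y m))) α))
      - cE.d (cT.d A B) (hcd cT cE N Y α)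
      + (∑ m : Fin N, hcd cT cE N (Function.update Y m (cT.d (cT.d A B) (Y m))) α)
      - (∑ m : Fin N, cE.d B (hcd cT cE N (Function.update Y m (cT.d A (Y m))) α))
      + ∑ m : Fin N, ∑ p : Fin N,
          hcd cT cE N (Function.update (Function.update Y m (cT.d A (Y m))) p
            (cT.d B (Function.update Y m (cT.d A (Y m)) p))) α := by
  rw [hcd_cons cT cE (N + 1) A (Fin.cons B Y) α]
  simp only [Fin.cons_zero, Fin.cons_succ, Fin.update_cons_zero, ← Fin.cons_update,
    Fin.sum_univ_succ, hcd_cons, Conn.d_sub_right, Conn.d_sum_right, Finset.sum_sub_distrib]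
  abel

theorem hcd_swap (N : ℕ) (X₀ X₁ : V) (Y : Fin N → V) (α : E) :
    hcd cT cE (N + 1 + 1) (Fin.cons X₀ (Fin.cons X₁ Y)) α
      - hcd cT cE (N + 1 + 1) (Fin.cons X₁ (Fin.cons X₀ Y)) α
    = curvHom cT cE X₀ X₁ (hcd cT cE N Y α)
      - ∑ m : Fin N, hcd cT cE N (Function.update Y m (curvHom cT cT X₀ X₁ (Y m))) α := by
  have hK : ∀ m : Fin N, hcd cT cE N (Function.update Y m (curvHom cT cT X₀ X₁ (Y m))) α
      = hcd cT cE N (Function.update Y m (cT.d X₀ (cT.d X₁ (Y m)))) α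
        - hcd cT cE N (Function.update Y m (cT.d X₁ (cT.d X₀ (Y m)))) α
        - (hcd cT cE N (Function.update Y m (cT.d (cT.d X₀ X₁) (Y m))) α
           - hcd cT cE N (Function.update Y m (cT.d (cT.d X₁ X₀) (Y m))) α) := by
    intro m
    rw [curvHom_apply, hcd_update_sub, hcd_update_sub, cT.d_sub_left, hcd_update_sub]
  have hW : ∀ A B : V, (∑ m : Fin N, ∑ p : Fin N,
        hcd cT cE N (Function.update (Function.update Y m (cT.d A (Y m))) p
          (cT.d B (Function.update Y m (cT.d A (Y m)) p))) α)
      = (∑ m : Fin N, hcd cT cE N (Function.update Y m (cT.d B (cT.d A (Y m)))) α)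
        + ∑ m : Fin N, ∑ p : Fin N, (if p = m then 0 else
            hcd cT cE N (Function.update (Function.update Y m (cT.d A (Y m))) p
              (cT.d B (Y p))) α) := by
    intro A B
    rw [sum_sum_eq_diag_add_off]
    congr 1
    · refine Finset.sum_congr rfl fun m _ => ?_
      rw [Function.update_self, Function.update_idem]
    · refine Finset.sum_congr rfl fun m _ => Finset.sum_congr rfl fun p _ => ?_
      by_cases h : p = m
      · simp [h]
      · rw [Function.update_of_ne h]
  have hOff : (∑ m : Fin N, ∑ p : Fin N, (if p = m then 0 else
        hcd cT cE N (Function.update (Function.update Y m (cT.d X₀ (Y m))) p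
          (cT.d X₁ (Y p))) α))
      = ∑ m : Fin N, ∑ p : Fin N, (if p = m then 0 else
        hcd cT cE N (Function.update (Function.update Y m (cT.d X₁ (Y m))) p
          (cT.d X₀ (Y p))) α) := by
    refine sum_sum_off_symm _ _ fun m p hpm => ?_
    rw [Function.update_comm (Ne.symm hpm)]
  rw [hcd_expand2, hcd_expand2, curvHom_apply, cE.d_sub_left,
      Finset.sum_congr rfl (fun m _ => hK m), hW X₀ X₁, hW X₁ X₀, hOff]
  simp only [Finset.sum_sub_distrib]
  abel

end Key

section Alt

theorem altTuple_apply {j : ℕ} (v w : Fin j → V) (ε : Fin j → Bool) (q : Fin (2 * j)) :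
    altTuple v w ε q
      = if q.1 % 2 = 0
        then (if ε ⟨q.1 / 2, by have := q.2; omega⟩ then v ⟨q.1 / 2, by have := q.2; omega⟩
              else w ⟨q.1 / 2, by have := q.2; omega⟩)
        else (if ε ⟨q.1 / 2, by have := q.2; omega⟩ then w ⟨q.1 / 2, by have := q.2; omega⟩
              else v ⟨q.1 / 2, by have := q.2; omega⟩) := rfl

theorem altTuple_even {j : ℕ} (v w : Fin j → V) (ε : Fin j → Bool) (m : Fin j) :
    altTuple v w ε ⟨2 * m.1, by have := m.2; omega⟩ = if ε m then v m else w m := by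
  have h2 : 2 * m.1 / 2 = m.1 := by omega
  simp only [altTuple_apply, h2, Fin.eta]
  rw [if_pos (by omega)]

theorem altTuple_odd {j : ℕ} (v w : Fin j → V) (ε : Fin j → Bool) (m : Fin j) :
    altTuple v w ε ⟨2 * m.1 + 1, by have := m.2; omega⟩ = if ε m then w m else v m := by
  have h2 : (2 * m.1 + 1) / 2 = m.1 := by omega
  simp only [altTuple_apply, h2, Fin.eta]
  rw [if_neg (by omega)]

end Alt

section Alt2

set_option linter.unusedSectionVars false

theorem altTuple_update_v_true {j : ℕ} (v w : Fin j → V) (ε : Fin j → Bool) (m : Fin j)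
    (hε : ε m = true) (c : V) :
    altTuple (Function.update v m c) w ε
      = Function.update (altTuple v w ε) ⟨2 * m.1, by have := m.2; omega⟩ c := by
  funext q
  rcases q with ⟨x, hx⟩
  simp only [altTuple_apply, Function.update_apply, Fin.ext_iff]
  by_cases h0 : x = 2 * m.1
  · have h2 : x / 2 = m.1 := by omega
    have h3 : x % 2 = 0 := by omega
    have hm : (⟨x / 2, by omega⟩ : Fin j) = m := Fin.ext h2
    simp [h0, h2, h3, hm, hε]
  · by_cases h1 : x / 2 = m.1
    · have h3 : x % 2 = 1 := by omega
      have hm : (⟨x / 2, by omega⟩ : Fin j) = m := Fin.ext h1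
      simp [h0, h3, hm, hε]
    · simp [h0, h1]

theorem altTuple_update_w_true {j : ℕ} (v w : Fin j → V) (ε : Fin j → Bool) (m : Fin j)
    (hε : ε m = true) (c : V) :
    altTuple v (Function.update w m c) ε
      = Function.update (altTuple v w ε) ⟨2 * m.1 + 1, by have := m.2; omega⟩ c := by
  funext q
  rcases q with ⟨x, hx⟩
  simp only [altTuple_apply, Function.update_apply, Fin.ext_iff]
  by_cases h0 : x = 2 * m.1 + 1
  · subst h0
    have h2 : (2 * m.1 + 1) / 2 = m.1 := by omega
    have h3 : (2 * m.1 + 1) % 2 = 1 := by omega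
    simp [h2, h3, hε, Fin.eta]
  · by_cases h1 : x / 2 = m.1
    · have h3 : x % 2 = 0 := by omega
      have hm : (⟨x / 2, by omega⟩ : Fin j) = m := Fin.ext h1
      simp [h0, h3, hm, hε]
    · simp [h0, h1]

theorem altTuple_update_v_false {j : ℕ} (v w : Fin j → V) (ε : Fin j → Bool) (m : Fin j)
    (hε : ε m = false) (c : V) :
    altTuple (Function.update v m c) w ε
      = Function.update (altTuple v w ε) ⟨2 * m.1 + 1, by have := m.2; omega⟩ c := by
  funext q
  rcases q with ⟨x, hx⟩
  simp only [altTuple_apply, Function.update_apply, Fin.ext_iff]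
  by_cases h0 : x = 2 * m.1 + 1
  · subst h0
    have h2 : (2 * m.1 + 1) / 2 = m.1 := by omega
    have h3 : (2 * m.1 + 1) % 2 = 1 := by omega
    simp [h2, h3, hε, Fin.eta]
  · by_cases h1 : x / 2 = m.1
    · have h3 : x % 2 = 0 := by omega
      have hm : (⟨x / 2, by omega⟩ : Fin j) = m := Fin.ext h1
      simp [h0, h3, hm, hε]
    · simp [h0, h1]

theorem altTuple_update_w_false {j : ℕ} (v w : Fin j → V) (ε : Fin j → Bool) (m : Fin j)
    (hε : ε m = false) (c : V) :
    altTuple v (Function.update w m c) ε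
      = Function.update (altTuple v w ε) ⟨2 * m.1, by have := m.2; omega⟩ c := by
  funext q
  rcases q with ⟨x, hx⟩
  simp only [altTuple_apply, Function.update_apply, Fin.ext_iff]
  by_cases h0 : x = 2 * m.1
  · have h2 : x / 2 = m.1 := by omega
    have h3 : x % 2 = 0 := by omega
    have hm : (⟨x / 2, by omega⟩ : Fin j) = m := Fin.ext h2
    simp [h0, h2, h3, hm, hε]
  · by_cases h1 : x / 2 = m.1
    · have h3 : x % 2 = 1 := by omega
      have hm : (⟨x / 2, by omega⟩ : Fin j) = m := Fin.ext h1
      simp [h0, h3, hm, hε]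
    · simp [h0, h1]

end Alt2

section Comb

set_option linter.unusedSectionVars false

theorem altTuple_cons {j : ℕ} (v w : Fin (j + 1) → V) (b : Bool) (ε : Fin j → Bool) :
    altTuple v w (Fin.cons b ε)
      = Fin.cons (if b then v 0 else w 0)
          (Fin.cons (if b then w 0 else v 0)
            (altTuple (fun i => v i.succ) (fun i => w i.succ) ε)) := by
  funext q
  rcases q with ⟨x, hx⟩
  match x, hx with
  | 0, hx =>
    simp only [altTuple_apply]
    norm_num
  | 1, hx =>
    simp only [altTuple_apply]
    norm_num
  | (y + 2), hx =>
    have e0 : (⟨y + 2, hx⟩ : Fin (2 * j + 1 + 1)) = Fin.succ (Fin.succ ⟨y, by omega⟩) := rfl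
    rw [e0, Fin.cons_succ, Fin.cons_succ]
    simp only [altTuple_apply, Fin.val_succ]
    have e2 : (⟨(y + 1 + 1) / 2, by omega⟩ : Fin (j + 1)) = Fin.succ ⟨y / 2, by omega⟩ :=
      Fin.ext (by simp [Fin.val_succ]; omega)
    rw [e2, Fin.cons_succ]
    have e3 : (y + 1 + 1) % 2 = y % 2 := by omega
    simp only [e3]

open scoped Classical in
theorem card_filter_cons_false {j : ℕ} (b : Bool) (ε : Fin j → Bool) :
    (Finset.univ.filter fun k : Fin (j + 1) => (Fin.cons b ε : Fin (j + 1) → Bool) k = false).card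
      = (if b then 0 else 1)
        + (Finset.univ.filter fun k : Fin j => ε k = false).card := by
  rw [Finset.card_filter, Finset.card_filter, Fin.sum_univ_succ, Fin.cons_zero]
  simp only [Fin.cons_succ]
  cases b <;> simp

def pairFinEquiv (j : ℕ) : Fin j × Bool ≃ Fin (2 * j) where
  toFun p := ⟨2 * p.1.1 + (if p.2 then 1 else 0), by
    rcases p with ⟨⟨m, hm⟩, b⟩; cases b <;> simp <;> omega⟩
  invFun q := (⟨q.1 / 2, Nat.div_lt_of_lt_mul q.isLt⟩, decide (q.1 % 2 = 1))
  left_inv := by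
    rintro ⟨⟨m, hm⟩, b⟩
    cases b <;> simp [Prod.ext_iff, Fin.ext_iff] <;> omega
  right_inv := by
    rintro ⟨x, hx⟩
    by_cases h : x % 2 = 0
    · have h2 : 2 * (x / 2) = x := by omega
      simp [Fin.ext_iff, h, h2]
    · have h3 : x % 2 = 1 := by omega
      have h2 : 2 * (x / 2) + 1 = x := by omega
      simp [Fin.ext_iff, h3, h2]

theorem sum_pair {M : Type*} [AddCommMonoid M] {j : ℕ} (g : Fin (2 * j) → M) :
    ∑ k, g k
      = ∑ m : Fin j,
          (g ⟨2 * m.1, by have := m.2; omega⟩ + g ⟨2 * m.1 + 1, by have := m.2; omega⟩) := by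
  rw [← Fintype.sum_equiv (pairFinEquiv j) (fun p => g (pairFinEquiv j p)) g (fun p => rfl),
      Fintype.sum_prod_type]
  refine Finset.sum_congr rfl fun m _ => ?_
  rw [Fintype.sum_bool, add_comm]
  congr 1

theorem sum_pi_bool_succ {M : Type*} [AddCommMonoid M] {j : ℕ}
    (F : (Fin (j + 1) → Bool) → M) :
    ∑ ε : Fin (j + 1) → Bool, F ε
      = (∑ ε : Fin j → Bool, F (Fin.cons true ε))
        + ∑ ε : Fin j → Bool, F (Fin.cons false ε) := by
  rw [← Fintype.sum_equiv (Fin.consEquiv (fun _ : Fin (j + 1) => Bool))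
        (fun p => F (Fin.cons p.1 p.2)) F (fun p => by rcases p with ⟨b, ε⟩; rfl),
      Fintype.sum_prod_type, Fintype.sum_bool]

end Comb

section Final

set_option linter.unusedSectionVars false

variable {E : Type*} [AddCommGroup E] [Module R E] {D : VFAct R V}
variable (cT : Conn R V V D) (cE : Conn R V E D)

theorem pair_update_sum {j : ℕ} (v w : Fin j → V) (ε : Fin j → Bool) (m : Fin j)
    (q : V → V) (β : E) :
    hcd cT cE (2 * j) (Function.update (altTuple v w ε) ⟨2 * m.1, by have := m.2; omega⟩
        (q (altTuple v w ε ⟨2 * m.1, by have := m.2; omega⟩))) β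
      + hcd cT cE (2 * j) (Function.update (altTuple v w ε) ⟨2 * m.1 + 1, by have := m.2; omega⟩
          (q (altTuple v w ε ⟨2 * m.1 + 1, by have := m.2; omega⟩))) β
    = hcd cT cE (2 * j) (altTuple (Function.update v m (q (v m))) w ε) β
      + hcd cT cE (2 * j) (altTuple v (Function.update w m (q (w m))) ε) β := by
  cases hb : ε m with
  | false =>
    rw [altTuple_even, altTuple_odd, hb]
    simp only [Bool.false_eq_true, if_false]
    rw [altTuple_update_w_false v w ε m hb, altTuple_update_v_false v w ε m hb, add_comm]
  | true =>
    rw [altTuple_even, altTuple_odd, hb]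
    simp only [if_true]
    rw [altTuple_update_v_true v w ε m hb, altTuple_update_w_true v w ε m hb]

open scoped Classical in
theorem S_succ (j : ℕ) (v w : Fin (j + 1) → V) (β : E) :
    (∑ ε : Fin (j + 1) → Bool,
        ((-1 : ℤ) ^ (Finset.univ.filter (fun k => ε k = false)).card) •
          hcd cT cE (2 * (j + 1)) (altTuple v w ε) β)
      = curvHom cT cE (v 0) (w 0)
          (∑ ε : Fin j → Bool,
            ((-1 : ℤ) ^ (Finset.univ.filter (fun k => ε k = false)).card) •
              hcd cT cE (2 * j) (altTuple (fun i => v i.succ) (fun i => w i.succ) ε) β)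
        - ∑ m : Fin j,
            ((∑ ε : Fin j → Bool,
                ((-1 : ℤ) ^ (Finset.univ.filter (fun k => ε k = false)).card) •
                  hcd cT cE (2 * j)
                    (altTuple (Function.update (fun i => v i.succ) m
                        (curvHom cT cT (v 0) (w 0) ((fun i => v i.succ) m)))
                      (fun i => w i.succ) ε) β)
              + ∑ ε : Fin j → Bool,
                ((-1 : ℤ) ^ (Finset.univ.filter (fun k => ε k = false)).card) •
                  hcd cT cE (2 * j)
                    (altTuple (fun i => v i.succ)
                      (Function.update (fun i => w i.succ) m
                        (curvHom cT cT (v 0) (w 0) ((fun i => w i.succ) m))) ε) β) := by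
  have hct : ∀ ε : Fin j → Bool,
      (Finset.univ.filter fun k : Fin (j + 1) =>
        (Fin.cons true ε : Fin (j + 1) → Bool) k = false).card
      = (Finset.univ.filter fun k : Fin j => ε k = false).card := by
    intro ε; rw [card_filter_cons_false]; simp
  have hcf : ∀ ε : Fin j → Bool,
      (Finset.univ.filter fun k : Fin (j + 1) =>
        (Fin.cons false ε : Fin (j + 1) → Bool) k = false).card
      = (Finset.univ.filter fun k : Fin j => ε k = false).card + 1 := by
    intro ε; rw [card_filter_cons_false]; simp [add_comm]
  have hstep : ∀ ε : Fin j → Bool,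
      (((-1 : ℤ) ^ (Finset.univ.filter fun k : Fin (j + 1) =>
            (Fin.cons true ε : Fin (j + 1) → Bool) k = false).card) •
          hcd cT cE (2 * (j + 1)) (altTuple v w (Fin.cons true ε)) β)
        + (((-1 : ℤ) ^ (Finset.univ.filter fun k : Fin (j + 1) =>
            (Fin.cons false ε : Fin (j + 1) → Bool) k = false).card) •
          hcd cT cE (2 * (j + 1)) (altTuple v w (Fin.cons false ε)) β)
      = ((-1 : ℤ) ^ (Finset.univ.filter fun k : Fin j => ε k = false).card) •
          (curvHom cT cE (v 0) (w 0)
            (hcd cT cE (2 * j) (altTuple (fun i => v i.succ) (fun i => w i.succ) ε) β)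
          - ∑ k : Fin (2 * j),
              hcd cT cE (2 * j)
                (Function.update (altTuple (fun i => v i.succ) (fun i => w i.succ) ε) k
                  (curvHom cT cT (v 0) (w 0)
                    (altTuple (fun i => v i.succ) (fun i => w i.succ) ε k))) β) := by
    intro ε
    rw [hct, hcf, altTuple_cons, altTuple_cons, pow_succ, mul_smul, neg_one_smul ℤ,
        smul_neg, ← sub_eq_add_neg, ← smul_sub]
    exact congrArg _ (hcd_swap cT cE (2 * j) (v 0) (w 0)
      (altTuple (fun i => v i.succ) (fun i => w i.succ) ε) β)
  rw [sum_pi_bool_succ, ← Finset.sum_add_distrib,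
      Finset.sum_congr rfl (fun ε _ => hstep ε)]
  have hsplit : ∀ ε : Fin j → Bool,
      ((-1 : ℤ) ^ (Finset.univ.filter fun k : Fin j => ε k = false).card) •
          (curvHom cT cE (v 0) (w 0)
            (hcd cT cE (2 * j) (altTuple (fun i => v i.succ) (fun i => w i.succ) ε) β)
          - ∑ k : Fin (2 * j),
              hcd cT cE (2 * j)
                (Function.update (altTuple (fun i => v i.succ) (fun i => w i.succ) ε) k
                  (curvHom cT cT (v 0) (w 0)
                    (altTuple (fun i => v i.succ) (fun i => w i.succ) ε k))) β)
      = curvHom cT cE (v 0) (w 0)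
          (((-1 : ℤ) ^ (Finset.univ.filter fun k : Fin j => ε k = false).card) •
            hcd cT cE (2 * j) (altTuple (fun i => v i.succ) (fun i => w i.succ) ε) β)
        - ∑ m : Fin j,
            (((-1 : ℤ) ^ (Finset.univ.filter fun k : Fin j => ε k = false).card) •
                hcd cT cE (2 * j)
                  (altTuple (Function.update (fun i => v i.succ) m
                      (curvHom cT cT (v 0) (w 0) ((fun i => v i.succ) m)))
                    (fun i => w i.succ) ε) β
              + ((-1 : ℤ) ^ (Finset.univ.filter fun k : Fin j => ε k = false).card) •
                hcd cT cE (2 * j)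
                  (altTuple (fun i => v i.succ)
                    (Function.update (fun i => w i.succ) m
                      (curvHom cT cT (v 0) (w 0) ((fun i => w i.succ) m))) ε) β) := by
    intro ε
    rw [smul_sub, ← map_zsmul (curvHom cT cE (v 0) (w 0))]
    congr 1
    rw [sum_pair (g := fun k : Fin (2 * j) =>
          hcd cT cE (2 * j)
            (Function.update (altTuple (fun i => v i.succ) (fun i => w i.succ) ε) k
              (curvHom cT cT (v 0) (w 0)
                (altTuple (fun i => v i.succ) (fun i => w i.succ) ε k))) β),
        Finset.smul_sum]
    refine Finset.sum_congr rfl fun m _ => ?_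
    rw [pair_update_sum cT cE (fun i => v i.succ) (fun i => w i.succ) ε m
          (curvHom cT cT (v 0) (w 0)) β, smul_add]
  rw [Finset.sum_congr rfl (fun ε _ => hsplit ε), Finset.sum_sub_distrib,
      ← map_sum (curvHom cT cE (v 0) (w 0)), Finset.sum_comm]
  congr 1
  exact Finset.sum_congr rfl fun m _ => Finset.sum_add_distrib

end Final

section Main

set_option linter.unusedSectionVars false

variable {E : Type*} [AddCommGroup E] [Module R E] {D : VFAct R V}

open scoped Classical in
theorem main_aux (cT : Conn R V V D) (cE : Conn R V E D) (htf : TorsionFree cT) :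
    ∀ (j : ℕ) (v w : Fin j → V) (f : R) (α : E),
      (∑ ε : Fin j → Bool,
          ((-1 : ℤ) ^ (Finset.univ.filter (fun k => ε k = false)).card) •
            hcd cT cE (2 * j) (altTuple v w ε) (f • α)) =
        f • ∑ ε : Fin j → Bool,
          ((-1 : ℤ) ^ (Finset.univ.filter (fun k => ε k = false)).card) •
            hcd cT cE (2 * j) (altTuple v w ε) α := by
  intro j
  induction j with
  | zero =>
    intro v w f α
    have huniq : ∀ β : E,
        (∑ ε : Fin 0 → Bool,
            ((-1 : ℤ) ^ (Finset.univ.filter (fun k => ε k = false)).card) •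
              hcd cT cE (2 * 0) (altTuple v w ε) β) = β := by
      intro β
      rw [Fintype.sum_unique]
      simp
      rfl
    rw [huniq, huniq]
  | succ j ih =>
    intro v w f α
    rw [S_succ cT cE j v w (f • α), S_succ cT cE j v w α]
    simp only [ih, curvHom_smul cT cE htf]
    rw [smul_sub, Finset.smul_sum]
    congr 1
    exact Finset.sum_congr rfl fun m _ => (smul_add f _ _).symm

end Main
open scoped Classical in
/-- Tensoriality of even-order antisymmetrized higher covariant
derivatives.  If `∇̂` is torsion-free then for every `j ≥ 1` and all vector fields
`v₁,w₁,…,v_j,w_j`, the operator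
`∇^{2j}_{(v₁⊗w₁ − w₁⊗v₁) ⊗ ⋯ ⊗ (v_j⊗w_j − w_j⊗v_j)}` on `C^∞(E)` — expanded by
linearity as the signed sum over all `2^j` choices of orders — is `C^∞(M)`-linear:
it sends `f • α` to `f •` (its value on `α`). -/
theorem statement8
    {R : Type*} [CommRing R] [Algebra ℝ R]
    {V : Type*} [AddCommGroup V] [Module R V]
    {E : Type*} [AddCommGroup E] [Module R E]
    {D : VFAct R V} (cT : Conn R V V D) (cE : Conn R V E D)
    (htf : TorsionFree cT) :
    ∀ (j : ℕ), 1 ≤ j → ∀ (v w : Fin j → V) (f : R) (α : E),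
      (∑ ε : Fin j → Bool,
          ((-1 : ℤ) ^ (Finset.univ.filter (fun k => ε k = false)).card) •
            hcd cT cE (2 * j) (altTuple v w ε) (f • α)) =
        f • ∑ ε : Fin j → Bool,
          ((-1 : ℤ) ^ (Finset.univ.filter (fun k => ε k = false)).card) •
            hcd cT cE (2 * j) (altTuple v w ε) α := by
  exact fun j _ => main_aux cT cE htf j
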